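/- For any two Dynkin quivers Q and Q' on the same Dynkin diagram Δ and any i,j ∈ I, the functions η_{i,j}^Q and η_{i,j}^{Q'} coincide: η_{i,j}^Q(u) = η_{i,j}^{Q'}(u) for all u ∈ ℤ. -/

import Mathlib

noncomputable section

open scoped BigOperators

/-- A finite Cartan datum: a connected Dynkin diagram of finite type with vertex set `I`,
Cartan matrix `c`, symmetrizers `d`, simple roots `α`, fundamental weights `ϖ`, an invariant
symmetric bilinear form `form` (normalized so that `(α,α) = 2` for short roots, i.e. some
`d i = 1`), simple reflections `s` acting on the weight lattice `V`, the set of positive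
roots `Φ`, the longest element `w0` (with induced involution `star`), and Coxeter number
`hcox`. -/
structure SSDatum where
  I : Type
  [fintypeI : Fintype I]
  [decEqI : DecidableEq I]
  [nonemptyI : Nonempty I]
  V : Type
  [acgV : AddCommGroup V]
  [modV : Module ℚ V]
  [decEqV : DecidableEq V]
  c : I → I → ℤ
  d : I → ℤ
  α : I → V
  ϖ : I → V
  form : V → V → ℚ
  s : I → (V ≃ₗ[ℚ] V)
  Φ : Finset V
  w0 : V ≃ₗ[ℚ] V
  star : I → I
  hcox : ℤ
  c_diag : ∀ i, c i i = 2
  c_nonpos : ∀ i j, i ≠ j → c i j ≤ 0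
  c_zero_sym : ∀ i j, c i j = 0 → c j i = 0
  connected : ∀ i j, Relation.ReflTransGen (fun a b => a ≠ b ∧ c a b ≠ 0) i j
  d_pos : ∀ i, 0 < d i
  d_one : ∃ i, d i = 1
  d_symmetrize : ∀ i j, d i * c i j = d j * c j i
  exists_basis : ∃ b : Module.Basis I ℚ V, ∀ i, b i = ϖ i
  form_symm : ∀ x y, form x y = form y x
  form_add : ∀ x y z, form (x + y) z = form x z + form y z
  form_smul : ∀ (a : ℚ) (x y), form (a • x) y = a * form x y
  form_alpha : ∀ i j, form (α i) (α j) = (d i : ℚ) * (c i j : ℚ)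
  form_alpha_omega : ∀ i j, form (α i) (ϖ j) = if i = j then (d i : ℚ) else 0
  form_inv : ∀ i x y, form (s i x) (s i y) = form x y
  s_omega : ∀ i j, s i (ϖ j) = ϖ j - (if i = j then (1 : ℚ) else 0) • α i
  s_alpha : ∀ i j, s i (α j) = α j - ((c i j : ℚ)) • α i
  alpha_mem : ∀ i, α i ∈ Φ
  zero_not_mem : (0 : V) ∉ Φ
  pos_comb : ∀ β ∈ Φ, ∃ f : I → ℕ, β = ∑ i, (f i : ℚ) • α i
  s_perm : ∀ i, ∀ β ∈ Φ, β ≠ α i → s i β ∈ Φ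
  w0_mem : w0 ∈ Subgroup.closure (Set.range s)
  w0_alpha : ∀ i, w0 (α i) = - α (star i)
  star_invol : ∀ i, star (star i) = i
  w0_neg : ∀ β ∈ Φ, -(w0 β) ∈ Φ
  hcox_pos : 0 < hcox
  hcox_card : hcox * (Fintype.card I : ℤ) = 2 * (Φ.card : ℤ)

attribute [instance] SSDatum.fintypeI SSDatum.decEqI SSDatum.nonemptyI
attribute [instance] SSDatum.acgV SSDatum.modV SSDatum.decEqV

namespace SSDatum

variable (D : SSDatum)

/-- The underlying graph of the Dynkin diagram. -/
def graph : SimpleGraph D.I where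
  Adj a b := a ≠ b ∧ D.c a b ≠ 0
  symm := by
    constructor
    intro a b h
    exact ⟨h.1.symm, fun hz => h.2 (D.c_zero_sym b a hz)⟩
  loopless := by
    constructor
    intro a h
    exact h.1 rfl

/-- The graph distance `d(i,j)` in the Dynkin diagram. -/
def dist (i j : D.I) : ℕ := D.graph.dist i j

/-- The product `s_{i_1} ⋯ s_{i_r}` of simple reflections along a word. -/
def wordProd (l : List D.I) : D.V ≃ₗ[ℚ] D.V := (l.map D.s).prod

/-- The length of an element of the Weyl group. -/
def len (w : D.V ≃ₗ[ℚ] D.V) : ℕ :=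
  sInf {n | ∃ l : List D.I, l.length = n ∧ D.wordProd l = w}

/-- A word is a reduced expression of its product. -/
def IsReducedWord (l : List D.I) : Prop := l.length = D.len (D.wordProd l)

/-- The map `ŵ` on `Φ⁺ × ℤ`:
`ŵ(β,k) = (wβ, k)` if `wβ ∈ Φ⁺` and `ŵ(β,k) = (−wβ, k−1)` otherwise. -/
def hat (w : D.V ≃ₗ[ℚ] D.V) (x : D.V × ℤ) : D.V × ℤ :=
  if w x.1 ∈ D.Φ then (w x.1, x.2) else (-(w x.1), x.2 - 1)

/-- The map `(ŵ)⁻¹` on `Φ⁺ × ℤ`. -/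
def hatInv (w : D.V ≃ₗ[ℚ] D.V) (x : D.V × ℤ) : D.V × ℤ :=
  if w⁻¹ x.1 ∈ D.Φ then (w⁻¹ x.1, x.2) else (-(w⁻¹ x.1), x.2 + 1)

/-- `ξ` is a height function on the Dynkin diagram. -/
def IsHeight (ξ : D.I → ℤ) : Prop :=
  ∀ i j, D.dist i j = 1 → ξ i - ξ j = 1 ∨ ξ j - ξ i = 1

/-- `i` is a source of the Dynkin quiver `(Δ, ξ)`. -/
def IsSource (ξ : D.I → ℤ) (i : D.I) : Prop :=
  ∀ j, D.dist i j = 1 → ξ j < ξ i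

/-- The height function of the reflected quiver `s_i Q`. -/
def rHeight (ξ : D.I → ℤ) (i : D.I) : D.I → ℤ :=
  fun j => if j = i then ξ i - 2 else ξ j

/-- A sequence in `I` is adapted to the Dynkin quiver `(Δ, ξ)`. -/
def Adapted (ξ : D.I → ℤ) : List D.I → Prop
  | [] => True
  | i :: l => D.IsSource ξ i ∧ Adapted (D.rHeight ξ i) l

/-- `τ` is the Coxeter element `τ_Q` attached to the Dynkin quiver with height function `ξ`:
it has a `Q`-adapted reduced expression in which each simple reflection occurs exactly once. -/
def IsCoxeterFor (ξ : D.I → ℤ) (τ : D.V ≃ₗ[ℚ] D.V) : Prop :=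
  ∃ l : List D.I, l.Nodup ∧ (∀ i, i ∈ l) ∧ D.Adapted ξ l ∧ D.wordProd l = τ

/-- `γ_i^Q = (1 - τ_Q) ϖ_i`. -/
def gam (τ : D.V ≃ₗ[ℚ] D.V) (i : D.I) : D.V := D.ϖ i - τ (D.ϖ i)

/-- The map `φ_Q : Δ̂₀ → Φ⁺ × ℤ`, defined inductively from
`φ_Q(i, ξ_i) = (γ_i^Q, 0)` by applying `(τ̂_Q)^{∓1}` when moving `p ↦ p ± 2`. -/
def phi (ξ : D.I → ℤ) (τ : D.V ≃ₗ[ℚ] D.V) (i : D.I) (p : ℤ) : D.V × ℤ :=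
  if p ≤ ξ i then (D.hat τ)^[((ξ i - p) / 2).toNat] (D.gam τ i, 0)
  else (D.hatInv τ)^[((p - ξ i) / 2).toNat] (D.gam τ i, 0)

/-- The function `η_{i,j}^Q : ℤ → ℚ`. -/
def eta (ξ : D.I → ℤ) (τ : D.V ≃ₗ[ℚ] D.V) (i j : D.I) (u : ℤ) : ℚ :=
  if (u + ξ j - ξ i - 1) % 2 = 0 then
    D.form (D.ϖ i) ((τ ^ ((u + ξ j - ξ i - 1) / 2)) (D.gam τ j))
  else 0

end SSDatum

/-- The variable `t` of the field of formal Laurent series `ℚ((t))`. -/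
def tq : LaurentSeries ℚ := HahnSeries.single 1 1

namespace SSDatum

variable (D : SSDatum)

/-- The symmetrized `t`-quantized Cartan matrix `B(t) = C(t) · D⁻¹`, where
`C(t)_{i,i} = t + t⁻¹` and `C(t)_{i,j} = c_{i,j}` for `i ≠ j`. -/
def Bt : Matrix D.I D.I (LaurentSeries ℚ) :=
  Matrix.of fun i j =>
    (if i = j then tq + tq⁻¹ else (D.c i j : LaurentSeries ℚ)) * ((D.d j : LaurentSeries ℚ))⁻¹

/-- `b̃_{i,j}(u)`: the coefficient of `t^u` in the Laurent expansion of `(B(t)⁻¹)_{i,j}`. -/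
def btilde (i j : D.I) (u : ℤ) : ℚ := ((D.Bt)⁻¹ i j).coeff u

/-- `Ñ(i,p;j,s) = b̃_{i,j}(p−s−1) − b̃_{i,j}(s−p−1) − b̃_{i,j}(p−s+1) + b̃_{i,j}(s−p+1)`. -/
def Ncal (i : D.I) (p : ℤ) (j : D.I) (q : ℤ) : ℚ :=
  D.btilde i j (p - q - 1) - D.btilde i j (q - p - 1)
    - D.btilde i j (p - q + 1) + D.btilde i j (q - p + 1)

end SSDatum

namespace SSDatum

variable (D : SSDatum)

lemma mul_apply (f g : D.V ≃ₗ[ℚ] D.V) (x : D.V) : (f * g) x = f (g x) := rfl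

lemma equiv_ext {f g : D.V ≃ₗ[ℚ] D.V} (h : ∀ r, f (D.ϖ r) = g (D.ϖ r)) : f = g := by
  obtain ⟨b, hb⟩ := D.exists_basis
  apply LinearEquiv.toLinearMap_injective
  apply Module.Basis.ext b
  intro r
  simpa [hb] using h r

lemma s_omega_ne {i j : D.I} (h : i ≠ j) : D.s i (D.ϖ j) = D.ϖ j := by
  rw [D.s_omega]; simp [h]

lemma s_omega_self (i : D.I) : D.s i (D.ϖ i) = D.ϖ i - D.α i := by
  rw [D.s_omega]; simp

lemma s_alpha_zero {i j : D.I} (h : D.c i j = 0) : D.s i (D.α j) = D.α j := by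
  rw [D.s_alpha, h]; simp

lemma s_invol (k : D.I) : D.s k * D.s k = 1 := by
  apply D.equiv_ext
  intro r
  rw [D.mul_apply]
  by_cases h : k = r
  · subst h
    rw [D.s_omega_self, map_sub, D.s_omega_self, D.s_alpha, D.c_diag]
    show _ = D.ϖ k
    module
  · rw [D.s_omega_ne h, D.s_omega_ne h]; rfl

lemma s_apply_s (k : D.I) (x : D.V) : D.s k (D.s k x) = x := by
  have := congrArg (fun f : D.V ≃ₗ[ℚ] D.V => f x) (D.s_invol k)
  simpa [D.mul_apply] using this

lemma s_comm {m k : D.I} (hne : m ≠ k) (hc : D.c m k = 0) :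
    D.s m * D.s k = D.s k * D.s m := by
  have hc' : D.c k m = 0 := D.c_zero_sym m k hc
  apply D.equiv_ext
  intro r
  rw [D.mul_apply, D.mul_apply]
  by_cases hm : m = r
  · subst hm
    rw [D.s_omega_ne (Ne.symm hne), D.s_omega_self, map_sub, D.s_omega_ne (Ne.symm hne),
      D.s_alpha_zero hc']
  · by_cases hk : k = r
    · subst hk
      rw [D.s_omega_self, map_sub, D.s_omega_ne hne, D.s_alpha_zero hc, D.s_omega_self]
    · rw [D.s_omega_ne hk, D.s_omega_ne hm, D.s_omega_ne hk]


end SSDatum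
namespace SSDatum

variable (D : SSDatum)

lemma wordProd_nil : D.wordProd [] = 1 := rfl

lemma wordProd_cons (a : D.I) (l : List D.I) :
    D.wordProd (a :: l) = D.s a * D.wordProd l := by
  simp [wordProd]

lemma wordProd_append (a b : List D.I) :
    D.wordProd (a ++ b) = D.wordProd a * D.wordProd b := by
  simp [wordProd]

lemma form_word (l : List D.I) (x y : D.V) :
    D.form (D.wordProd l x) (D.wordProd l y) = D.form x y := by
  induction l generalizing x y with
  | nil => rfl
  | cons a t ih =>
    rw [D.wordProd_cons, D.mul_apply, D.mul_apply, D.form_inv, ih]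

lemma adj_of_dist_eq_one {a b : D.I} (h : D.dist a b = 1) : a ≠ b ∧ D.c a b ≠ 0 := by
  have := (SimpleGraph.dist_eq_one_iff_adj).mp h
  exact this

lemma dist_eq_one_of_adj {a b : D.I} (h1 : a ≠ b) (h2 : D.c a b ≠ 0) : D.dist a b = 1 :=
  (SimpleGraph.dist_eq_one_iff_adj).mpr ⟨h1, h2⟩

lemma dist_comm (a b : D.I) : D.dist a b = D.dist b a := SimpleGraph.dist_comm

/-- Two distinct sources are non-adjacent. -/
lemma src_not_adj {ξ : D.I → ℤ} {m k : D.I} (hm : D.IsSource ξ m) (hk : D.IsSource ξ k)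
    (hne : m ≠ k) : D.c m k = 0 := by
  by_contra hc
  have h1 : D.dist m k = 1 := D.dist_eq_one_of_adj hne hc
  have h2 : D.dist k m = 1 := by rw [D.dist_comm]; exact h1
  exact absurd (hm k h1) (not_lt.mpr (le_of_lt (hk m h2)))

lemma isSource_rHeight_of_ne {ξ : D.I → ℤ} {m k : D.I} (hk : D.IsSource ξ k) (hne : k ≠ m) :
    D.IsSource (D.rHeight ξ m) k := by
  intro j hj
  have h0 := hk j hj
  simp only [rHeight, hne, if_false]
  split_ifs with h1
  · subst h1; omega
  · exact h0

lemma isSource_rHeight_of_not_adj {ξ : D.I → ℤ} {m k : D.I} (hm : D.IsSource ξ m)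
    (hne : m ≠ k) (hc : D.c m k = 0) : D.IsSource (D.rHeight ξ k) m := by
  intro j hj
  have hjk : j ≠ k := by
    rintro rfl
    exact (D.adj_of_dist_eq_one hj).2 hc
  have := hm j hj
  simp only [rHeight, hjk, hne, if_false]
  exact this

lemma rHeight_comm {m k : D.I} (hne : m ≠ k) (ξ : D.I → ℤ) :
    D.rHeight (D.rHeight ξ m) k = D.rHeight (D.rHeight ξ k) m := by
  funext j
  simp only [rHeight]
  by_cases h1 : j = k <;> by_cases h2 : j = m <;>
    simp [h1, h2, hne, Ne.symm hne]

/-- Move a source to the front of an adapted word. -/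
lemma moveFront {k : D.I} : ∀ (l : List D.I) (ξ : D.I → ℤ), l.Nodup → D.Adapted ξ l →
    D.IsSource ξ k → k ∈ l →
    D.wordProd l = D.s k * D.wordProd (l.erase k) ∧ D.Adapted (D.rHeight ξ k) (l.erase k) := by
  intro l
  induction l with
  | nil => intro ξ _ _ _ h; exact absurd h List.not_mem_nil
  | cons m t ih =>
    intro ξ hnd had hk hmem
    obtain ⟨hmsrc, htad⟩ := had
    by_cases hmk : m = k
    · subst hmk
      rw [List.erase_cons_head]
      exact ⟨D.wordProd_cons m t, htad⟩
    · have hkt : k ∈ t := by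
        rcases List.mem_cons.mp hmem with h | h
        · exact absurd h.symm hmk
        · exact h
      have hc : D.c m k = 0 := D.src_not_adj hmsrc hk hmk
      have hksrc' : D.IsSource (D.rHeight ξ m) k := D.isSource_rHeight_of_ne hk (Ne.symm hmk)
      obtain ⟨hw, hA⟩ := ih (D.rHeight ξ m) (List.Nodup.of_cons hnd) htad hksrc' hkt
      have herase : (m :: t).erase k = m :: t.erase k := by
        rw [List.erase_cons_tail]
        simp [hmk]
      constructor
      · rw [herase, D.wordProd_cons, D.wordProd_cons, hw, ← mul_assoc, ← mul_assoc,
          D.s_comm hmk hc]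
      · rw [herase]
        refine ⟨D.isSource_rHeight_of_not_adj hmsrc hmk hc, ?_⟩
        rw [← D.rHeight_comm hmk]
        exact hA

end SSDatum
namespace SSDatum

variable (D : SSDatum)


lemma not_mem_erase_self {k : D.I} {l : List D.I} (hnd : l.Nodup) : k ∉ l.erase k := by
  intro hm
  have h1 : (l.erase k).count k = l.count k - 1 := List.count_erase_self
  have h2 := List.nodup_iff_count_le_one.mp hnd k
  have h3 : 0 < (l.erase k).count k := List.count_pos_iff.mpr hm
  omega

/-- Any two perm-equivalent nodup adapted words have the same product. -/
lemma prod_unique : ∀ (l' l : List D.I) (ξ : D.I → ℤ), l.Nodup → l'.Nodup → l.Perm l' →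
    D.Adapted ξ l → D.Adapted ξ l' → D.wordProd l = D.wordProd l' := by
  intro l'
  induction l' with
  | nil =>
    intro l ξ _ _ hp _ _
    rw [List.perm_nil.mp hp]
  | cons k t' ih =>
    intro l ξ hnd hnd' hp had had'
    obtain ⟨hksrc, ht'ad⟩ := had'
    have hkl : k ∈ l := hp.mem_iff.mpr List.mem_cons_self
    obtain ⟨hw, hA⟩ := D.moveFront l ξ hnd had hksrc hkl
    have hperase : (l.erase k).Perm t' := by
      have := hp.erase k
      rwa [List.erase_cons_head] at this
    rw [hw, D.wordProd_cons,
      ih (l.erase k) (D.rHeight ξ k) (hnd.erase k) (List.Nodup.of_cons hnd') hperase hA ht'ad]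

lemma coxeter_unique {ξ : D.I → ℤ} {τ τ' : D.V ≃ₗ[ℚ] D.V}
    (h : D.IsCoxeterFor ξ τ) (h' : D.IsCoxeterFor ξ τ') : τ = τ' := by
  obtain ⟨l, hnd, hfull, had, rfl⟩ := h
  obtain ⟨l', hnd', hfull', had', rfl⟩ := h'
  refine D.prod_unique l' l ξ hnd hnd' ?_ had had'
  rw [List.perm_iff_count]
  intro a
  rw [List.count_eq_one_of_mem hnd (hfull a), List.count_eq_one_of_mem hnd' (hfull' a)]

lemma adapted_append (a b : List D.I) : ∀ ξ : D.I → ℤ,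
    D.Adapted ξ (a ++ b) ↔ D.Adapted ξ a ∧ D.Adapted (a.foldl D.rHeight ξ) b := by
  induction a with
  | nil => intro ξ; simp [Adapted]
  | cons m t ih =>
    intro ξ
    show (D.IsSource ξ m ∧ D.Adapted (D.rHeight ξ m) (t ++ b)) ↔ _
    rw [ih (D.rHeight ξ m)]
    constructor
    · rintro ⟨h1, h2, h3⟩; exact ⟨⟨h1, h2⟩, h3⟩
    · rintro ⟨⟨h1, h2⟩, h3⟩; exact ⟨h1, h2, h3⟩

lemma foldl_rHeight : ∀ (l : List D.I), l.Nodup → ∀ (ξ : D.I → ℤ) (j : D.I),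
    (l.foldl D.rHeight ξ) j = if j ∈ l then ξ j - 2 else ξ j := by
  intro l
  induction l with
  | nil => intro _ ξ j; simp
  | cons m t ih =>
    intro hnd ξ j
    show (t.foldl D.rHeight (D.rHeight ξ m)) j = _
    rw [ih (List.Nodup.of_cons hnd)]
    by_cases hjm : j = m
    · subst hjm
      have hjt : j ∉ t := (List.nodup_cons.mp hnd).1
      simp [hjt, rHeight]
    · simp only [rHeight, hjm, if_false, List.mem_cons]
      by_cases hjt : j ∈ t <;> simp [hjt, hjm]

/-- `k ∉ l` implies the word product fixes `ϖ k`. -/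
lemma wordProd_fix {k : D.I} : ∀ (l : List D.I), k ∉ l → D.wordProd l (D.ϖ k) = D.ϖ k := by
  intro l
  induction l with
  | nil => intro _; rfl
  | cons m t ih =>
    intro h
    rw [D.wordProd_cons, D.mul_apply, ih (fun hm => h (List.mem_cons_of_mem m hm)),
      D.s_omega_ne (by rintro rfl; exact h List.mem_cons_self)]

/-- A source gives `τ ϖ_k = ϖ_k - α_k`. -/
lemma tau_omega_source {ξ : D.I → ℤ} {τ : D.V ≃ₗ[ℚ] D.V} {k : D.I}
    (hk : D.IsSource ξ k) (hτ : D.IsCoxeterFor ξ τ) : τ (D.ϖ k) = D.ϖ k - D.α k := by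
  obtain ⟨l, hnd, hfull, had, rfl⟩ := hτ
  obtain ⟨hw, _⟩ := D.moveFront l ξ hnd had hk (hfull k)
  rw [hw, D.mul_apply, D.wordProd_fix (l.erase k) (D.not_mem_erase_self hnd), D.s_omega_self]

/-- Reflection of a Coxeter pair at a source. -/
lemma coxeter_rHeight {ξ : D.I → ℤ} {τ : D.V ≃ₗ[ℚ] D.V} {k : D.I}
    (hk : D.IsSource ξ k) (hτ : D.IsCoxeterFor ξ τ) :
    D.IsCoxeterFor (D.rHeight ξ k) (D.s k * τ * D.s k) := by
  obtain ⟨l, hnd, hfull, had, rfl⟩ := hτ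
  obtain ⟨hw, hA⟩ := D.moveFront l ξ hnd had hk (hfull k)
  have hknotin : k ∉ l.erase k := D.not_mem_erase_self hnd
  refine ⟨l.erase k ++ [k], ?_, ?_, ?_, ?_⟩
  · rw [List.nodup_append]
    exact ⟨hnd.erase k, List.nodup_singleton k, by simpa using fun a (ha : a ∈ l.erase k) (hak : a = k) => hknotin (by subst hak; exact ha)⟩
  · intro i
    by_cases hik : i = k
    · subst hik; simp
    · simp only [List.mem_append, List.mem_singleton]
      exact Or.inl ((List.mem_erase_of_ne hik).mpr (hfull i))
  · rw [D.adapted_append]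
    refine ⟨hA, ?_, trivial⟩
    intro j hj
    have hjk : j ≠ k := by
      rintro rfl
      simp [dist, SimpleGraph.dist_self] at hj
    have hjl : j ∈ l.erase k := (List.mem_erase_of_ne hjk).mpr (hfull j)
    rw [D.foldl_rHeight (l.erase k) (hnd.erase k), D.foldl_rHeight (l.erase k) (hnd.erase k)]
    simp only [hjl, if_true, hknotin, if_false, rHeight, hjk, if_false, if_pos rfl]
    have := hk j hj
    omega
  · rw [D.wordProd_append, hw]
    have h1 : D.wordProd [k] = D.s k := by simp [wordProd]
    rw [h1, ← mul_assoc, D.s_invol, one_mul]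

end SSDatum
namespace SSDatum

variable (D : SSDatum)

lemma isSource_shift {ξ : D.I → ℤ} {c : ℤ} {i : D.I} :
    D.IsSource (fun a => ξ a + c) i ↔ D.IsSource ξ i := by
  constructor <;> intro h j hj <;> have := h j hj <;> simp at this ⊢ <;> omega

lemma rHeight_shift (ξ : D.I → ℤ) (c : ℤ) (i : D.I) :
    D.rHeight (fun a => ξ a + c) i = fun a => D.rHeight ξ i a + c := by
  funext a
  simp only [rHeight]
  split_ifs <;> omega

lemma adapted_shift {c : ℤ} : ∀ (l : List D.I) (ξ : D.I → ℤ),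
    D.Adapted (fun a => ξ a + c) l ↔ D.Adapted ξ l := by
  intro l
  induction l with
  | nil => intro ξ; rfl
  | cons m t ih =>
    intro ξ
    show (D.IsSource _ m ∧ D.Adapted (D.rHeight (fun a => ξ a + c) m) t) ↔ _
    rw [D.rHeight_shift, D.isSource_shift, ih (D.rHeight ξ m)]
    rfl

lemma coxeter_shift {ξ : D.I → ℤ} {c : ℤ} {τ : D.V ≃ₗ[ℚ] D.V}
    (h : D.IsCoxeterFor ξ τ) : D.IsCoxeterFor (fun a => ξ a + c) τ := by
  obtain ⟨l, h1, h2, h3, h4⟩ := h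
  exact ⟨l, h1, h2, (D.adapted_shift l ξ).mpr h3, h4⟩

lemma isHeight_shift {ξ : D.I → ℤ} {c : ℤ} (h : D.IsHeight ξ) :
    D.IsHeight (fun a => ξ a + c) := by
  intro a b hab
  have := h a b hab
  simp only
  omega

lemma eta_shift (ξ : D.I → ℤ) (c : ℤ) (τ : D.V ≃ₗ[ℚ] D.V) (i j : D.I) (u : ℤ) :
    D.eta (fun a => ξ a + c) τ i j u = D.eta ξ τ i j u := by
  have h : u + (ξ j + c) - (ξ i + c) - 1 = u + ξ j - ξ i - 1 := by ring
  simp only [eta, h]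

lemma isHeight_rHeight {ξ : D.I → ℤ} {k : D.I} (h : D.IsHeight ξ) (hk : D.IsSource ξ k) :
    D.IsHeight (D.rHeight ξ k) := by
  intro a b hab
  have h1 := h a b hab
  simp only [rHeight]
  by_cases ha : a = k <;> by_cases hb : b = k
  · exfalso; rw [ha, hb] at hab; simp [dist, SimpleGraph.dist_self] at hab
  · have h2 := hk b (ha ▸ hab)
    rw [ha] at h1
    simp only [if_pos ha, if_neg hb]
    omega
  · have h2 := hk a (by rw [D.dist_comm, ← hb]; exact hab)
    rw [hb] at h1
    simp only [if_pos hb, if_neg ha]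
    omega
  · simp only [if_neg ha, if_neg hb]
    omega

lemma parity_const {ξ ξ' : D.I → ℤ} (h : D.IsHeight ξ) (h' : D.IsHeight ξ') (a b : D.I) :
    (ξ a - ξ' a) % 2 = (ξ b - ξ' b) % 2 := by
  have hconn := D.connected a b
  induction hconn with
  | refl => rfl
  | tail hst hadj ih =>
    rename_i x y
    have hd : D.dist x y = 1 := D.dist_eq_one_of_adj hadj.1 hadj.2
    have h1 := h x y hd
    have h2 := h' x y hd
    omega

end SSDatum
namespace SSDatum

variable (D : SSDatum)

lemma form_s_left (k : D.I) (x y : D.V) : D.form x (D.s k y) = D.form (D.s k x) y := by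
  conv_lhs => rw [← D.s_apply_s k x]
  rw [D.form_inv]

lemma eta_core {τ : D.V ≃ₗ[ℚ] D.V} {k : D.I}
    (hτw : ∀ x y, D.form (τ x) (τ y) = D.form x y)
    (hτk : τ (D.ϖ k) = D.ϖ k - D.α k) (i j : D.I) (e : ℤ) :
    D.form (D.ϖ i)
      (((D.s k * τ * D.s k) ^ (e + (if i = k then (1:ℤ) else 0) - (if j = k then (1:ℤ) else 0)))
        (D.ϖ j - (D.s k * τ * D.s k) (D.ϖ j)))
    = D.form (D.ϖ i) ((τ ^ e) (D.ϖ j - τ (D.ϖ j))) := by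
  have hσ := D.s_invol k
  have hconj : ∀ n : ℤ, (D.s k * τ * D.s k) ^ n = D.s k * τ ^ n * D.s k := by
    intro n
    have hinv : (D.s k)⁻¹ = D.s k := inv_eq_of_mul_eq_one_right hσ
    have h := map_zpow (MulAut.conj (D.s k)) τ n
    rw [MulAut.conj_apply, MulAut.conj_apply, hinv] at h
    exact h.symm
  set εi : ℤ := if i = k then (1:ℤ) else 0 with hεi
  set εj : ℤ := if j = k then (1:ℤ) else 0 with hεj
  rw [hconj]
  have h1 : (D.s k * τ * D.s k) (D.ϖ j) = D.s k (τ (D.s k (D.ϖ j))) := rfl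
  rw [h1]
  have h2 : (D.s k * τ ^ (e + εi - εj) * D.s k) (D.ϖ j - D.s k (τ (D.s k (D.ϖ j))))
      = D.s k ((τ ^ (e + εi - εj)) (D.s k (D.ϖ j) - τ (D.s k (D.ϖ j)))) := by
    rw [D.mul_apply, D.mul_apply, map_sub (D.s k), D.s_apply_s]
  rw [h2, D.form_s_left]
  -- Step A: handle the j side
  have hA : (τ ^ (e + εi - εj)) (D.s k (D.ϖ j) - τ (D.s k (D.ϖ j)))
      = (τ ^ (e + εi)) (D.ϖ j - τ (D.ϖ j)) := by
    by_cases hjk : j = k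
    · subst hjk
      have hsj : D.s j (D.ϖ j) = τ (D.ϖ j) := by rw [D.s_omega_self, hτk]
      rw [hεj, if_pos rfl, hsj, ← map_sub τ, ← D.mul_apply (τ ^ (e + εi - 1)) τ,
        ← zpow_add_one, sub_add_cancel]
    · rw [hεj, if_neg hjk, sub_zero, D.s_omega_ne (fun h => hjk h.symm)]
  rw [hA]
  -- Step B: handle the i side
  by_cases hik : i = k
  · subst hik
    have hsi : D.s i (D.ϖ i) = τ (D.ϖ i) := by rw [D.s_omega_self, hτk]
    rw [hεi, if_pos rfl, hsi, show e + 1 = 1 + e from add_comm e 1, zpow_add, zpow_one,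
      D.mul_apply, hτw]
  · rw [hεi, if_neg hik, add_zero, D.s_omega_ne (fun h => hik h.symm)]

lemma eta_step {ξ : D.I → ℤ} {τ : D.V ≃ₗ[ℚ] D.V} {k : D.I}
    (hk : D.IsSource ξ k) (hτ : D.IsCoxeterFor ξ τ) (i j : D.I) (u : ℤ) :
    D.eta ξ τ i j u = D.eta (D.rHeight ξ k) (D.s k * τ * D.s k) i j u := by
  have hτw : ∀ x y, D.form (τ x) (τ y) = D.form x y := by
    obtain ⟨l, _, _, _, hlp⟩ := hτ
    intro x y
    rw [← hlp]
    exact D.form_word l x y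
  have hτk := D.tau_omega_source hk hτ
  simp only [eta, gam]
  set m := u + ξ j - ξ i - 1 with hm
  set εi : ℤ := if i = k then (1:ℤ) else 0 with hεi
  set εj : ℤ := if j = k then (1:ℤ) else 0 with hεj
  have h01i : εi = 0 ∨ εi = 1 := by rw [hεi]; split_ifs <;> simp
  have h01j : εj = 0 ∨ εj = 1 := by rw [hεj]; split_ifs <;> simp
  have hm' : u + D.rHeight ξ k j - D.rHeight ξ k i - 1 = m + 2 * εi - 2 * εj := by
    rw [hm, hεi, hεj]
    simp only [rHeight]
    split_ifs <;> subst_vars <;> omega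
  rw [hm']
  by_cases hp : m % 2 = 0
  · rw [if_pos hp, if_pos (by omega), show (m + 2 * εi - 2 * εj) / 2 = m / 2 + εi - εj by omega]
    exact (D.eta_core hτw hτk i j (m / 2)).symm
  · rw [if_neg hp, if_neg (by omega)]

end SSDatum
namespace SSDatum

variable (D : SSDatum)

lemma eta_eq_aux (ξ'' : D.I → ℤ) (τ'' : D.V ≃ₗ[ℚ] D.V) (hh'' : D.IsHeight ξ'')
    (hc'' : D.IsCoxeterFor ξ'' τ'') (i j : D.I) (u : ℤ) :
    ∀ n : ℕ, ∀ (ξ : D.I → ℤ) (τ : D.V ≃ₗ[ℚ] D.V), D.IsHeight ξ → D.IsCoxeterFor ξ τ →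
    (∀ a, ξ'' a ≤ ξ a) → (∀ a, (ξ a - ξ'' a) % 2 = 0) →
    (∑ a, (ξ a - ξ'' a)) ≤ (n : ℤ) →
    D.eta ξ τ i j u = D.eta ξ'' τ'' i j u := by
  intro n
  induction n with
  | zero =>
    intro ξ τ hh hc hle hpar hsum
    have hnn : ∀ a ∈ Finset.univ, (0:ℤ) ≤ ξ a - ξ'' a := fun a _ => by
      have := hle a; omega
    have hsum0 : ∑ a, (ξ a - ξ'' a) = 0 :=
      le_antisymm (by exact_mod_cast hsum) (Finset.sum_nonneg hnn)
    have hzero := (Finset.sum_eq_zero_iff_of_nonneg hnn).mp hsum0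
    have hxi : ξ = ξ'' := funext fun a => by
      have := hzero a (Finset.mem_univ a); omega
    subst hxi
    rw [D.coxeter_unique hc hc'']
  | succ n ih =>
    intro ξ τ hh hc hle hpar hsum
    by_cases hs : (∑ a, (ξ a - ξ'' a)) ≤ (n : ℤ)
    · exact ih ξ τ hh hc hle hpar hs
    · push_neg at hs
      obtain ⟨k₀, hk₀⟩ : ∃ a, ξ'' a < ξ a := by
        by_contra h; push_neg at h
        have h2 : ∑ a, (ξ a - ξ'' a) ≤ 0 :=
          Finset.sum_nonpos fun a _ => by have := h a; omega
        have h3 : (0:ℤ) ≤ (n:ℤ) := by exact_mod_cast Nat.zero_le n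
        omega
      set S : Finset D.I := Finset.univ.filter (fun a => ξ'' a < ξ a) with hS
      have hSne : S.Nonempty := ⟨k₀, by simp [hS, hk₀]⟩
      obtain ⟨k, hkS, hkmax⟩ := Finset.exists_max_image S ξ hSne
      have hkmem : ξ'' k < ξ k := by
        have := hkS; rw [hS, Finset.mem_filter] at this; exact this.2
      have hksrc : D.IsSource ξ k := by
        intro b hb
        have hh1 := hh k b hb
        by_cases hbS : ξ'' b < ξ b
        · have := hkmax b (by rw [hS, Finset.mem_filter]; exact ⟨Finset.mem_univ b, hbS⟩)
          omega
        · have hbeq : ξ'' b = ξ b := by have := hle b; omega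
          have hh2 := hh'' k b hb
          have hpk := hpar k
          omega
      rw [D.eta_step hksrc hc i j u]
      apply ih (D.rHeight ξ k) _ (D.isHeight_rHeight hh hksrc) (D.coxeter_rHeight hksrc hc)
      · intro a
        simp only [rHeight]
        split_ifs with h
        · subst h; have := hpar a; omega
        · exact hle a
      · intro a
        simp only [rHeight]
        split_ifs with h
        · subst h; have := hpar a; omega
        · exact hpar a
      · have hsplit : ∀ a ∈ Finset.univ,
            (D.rHeight ξ k a - ξ'' a) = (ξ a - ξ'' a) - (if a = k then 2 else 0) := by
          intro a _
          simp only [rHeight]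
          split_ifs with h
          · subst h; omega
          · omega
        rw [Finset.sum_congr rfl hsplit, Finset.sum_sub_distrib]
        rw [Finset.sum_ite_eq' Finset.univ k (fun _ => (2:ℤ))]
        simp only [Finset.mem_univ, if_true]
        have hsum' : ∑ a, (ξ a - ξ'' a) ≤ (n:ℤ) + 2 := by
          push_cast at hsum
          omega
        omega

end SSDatum
/-- For any two Dynkin quivers `Q`, `Q'` on the same Dynkin diagram `Δ`
and any `i,j ∈ I`, the functions `η_{i,j}^Q` and `η_{i,j}^{Q'}` coincide. -/
theorem stmt10 (D : SSDatum) (ξ ξ' : D.I → ℤ) (hξ : D.IsHeight ξ) (hξ' : D.IsHeight ξ')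
    (τ τ' : D.V ≃ₗ[ℚ] D.V) (hτ : D.IsCoxeterFor ξ τ) (hτ' : D.IsCoxeterFor ξ' τ')
    (i j : D.I) (u : ℤ) :
    D.eta ξ τ i j u = D.eta ξ' τ' i j u := by
  obtain ⟨a₀, -, hmin⟩ := Finset.exists_min_image Finset.univ (fun a => ξ a - ξ' a)
    ⟨Classical.arbitrary D.I, Finset.mem_univ _⟩
  set c : ℤ := ξ a₀ - ξ' a₀ with hc
  set ξ'' : D.I → ℤ := fun a => ξ' a + c with hξ''
  have hh'' : D.IsHeight ξ'' := D.isHeight_shift hξ'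
  have hc'' : D.IsCoxeterFor ξ'' τ' := D.coxeter_shift hτ'
  have hle : ∀ a, ξ'' a ≤ ξ a := fun a => by
    have := hmin a (Finset.mem_univ a)
    simp only [hξ'']
    omega
  have hpar : ∀ a, (ξ a - ξ'' a) % 2 = 0 := by
    intro a
    have h := D.parity_const hξ hh'' a a₀
    have h0 : ξ a₀ - ξ'' a₀ = 0 := by simp only [hξ'']; omega
    omega
  have hmain := D.eta_eq_aux ξ'' τ' hh'' hc'' i j u (∑ a, (ξ a - ξ'' a)).toNat ξ τ hξ hτ
    hle hpar (Int.self_le_toNat _)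
  rw [hmain]
  exact D.eta_shift ξ' c τ' i j u
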